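/- arXiv:2102.04330 — 4 statements merged into one kernel-verified Lean document; each statement's English description precedes it below -/
import Mathlib

section
/- The Stieltjes transform of the semicircle distribution, m_sc(z) = ∫ ρ_sc(x)/(x - z) dx where ρ_sc(x) = (1/(2π))√(max(4 - x², 0)), satisfies the self-consistent equation 1 + z·m_sc(z) + m_sc(z)² = 0 for every z in the upper half-plane. -/
open MeasureTheory

/-- The semicircle density `ρ_sc(x) = (1/(2π))·√(max(4 - x², 0))`. -/
noncomputable def rhoSC (x : ℝ) : ℝ := (1 / (2 * Real.pi)) * Real.sqrt (max (4 - x ^ 2) 0)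

/-- The Stieltjes transform of the semicircle distribution. -/
noncomputable def mSC (z : ℂ) : ℂ := ∫ x : ℝ, (rhoSC x : ℂ) / ((x : ℂ) - z)

open Complex

-- square root branch
noncomputable def wSC (z : ℂ) : ℂ := Complex.exp (Complex.log (4 - z^2) / 2)

lemma zeta_ne (z : ℂ) (hz : 0 < z.im) : (4 : ℂ) - z^2 ≠ 0 := by
  intro h
  have h2 : (z - 2) * (z + 2) = 0 := by linear_combination -h
  rcases mul_eq_zero.1 h2 with h | h
  · have := congrArg Complex.im h; simp at this; linarith
  · have := congrArg Complex.im h; simp at this; linarith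

lemma wSC_sq (z : ℂ) (hz : 0 < z.im) : (wSC z)^2 = 4 - z^2 := by
  rw [wSC, sq, ← Complex.exp_add, add_halves]
  exact Complex.exp_log (zeta_ne z hz)

lemma log_half_im (u : ℂ) : (Complex.log u / 2).im = u.arg / 2 := by
  rw [Complex.div_im]
  simp [Complex.log_im, Complex.log_re, Complex.normSq]
  ring

lemma wSC_re (z : ℂ) : 0 ≤ (wSC z).re := by
  rw [wSC, Complex.exp_re, log_half_im]
  have h1 := Complex.neg_pi_lt_arg (4 - z^2)
  have h2 := Complex.arg_le_pi (4 - z^2)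
  exact mul_nonneg (Real.exp_pos _).le
    (Real.cos_nonneg_of_mem_Icc ⟨by linarith, by linarith⟩)

lemma wSC_im_neg (z : ℂ) (h : ((4:ℂ) - z^2).im < 0) : (wSC z).im < 0 := by
  have ha : (4 - z^2 : ℂ).arg < 0 := Complex.arg_neg_iff.2 h
  have h1 := Complex.neg_pi_lt_arg (4 - z^2)
  rw [wSC, Complex.exp_im, log_half_im]
  exact mul_neg_of_pos_of_neg (Real.exp_pos _)
    (Real.sin_neg_of_neg_of_neg_pi_lt (by linarith) (by linarith))

lemma wSC_im_pos (z : ℂ) (h : 0 < ((4:ℂ) - z^2).im) : 0 < (wSC z).im := by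
  have ha0 : 0 ≤ (4 - z^2 : ℂ).arg := Complex.arg_nonneg_iff.2 h.le
  have hane : (4 - z^2 : ℂ).arg ≠ 0 := by
    intro he
    rcases (Complex.arg_eq_zero_iff).1 he with ⟨_, him⟩
    · linarith
  have h2 := Complex.arg_le_pi (4 - z^2)
  have hpi := Real.pi_pos
  rw [wSC, Complex.exp_im, log_half_im]
  have hpos : 0 < (4 - z^2 : ℂ).arg := lt_of_le_of_ne ha0 (Ne.symm hane)
  exact mul_pos (Real.exp_pos _)
    (Real.sin_pos_of_pos_of_lt_pi (by linarith) (by linarith))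

lemma NSC_re (z : ℂ) (x s : ℝ) :
    ((4 : ℂ) - z * x + wSC z * (s:ℂ)).re = 4 - z.re * x + (wSC z).re * s := by
  simp [Complex.add_re, Complex.sub_re, Complex.mul_re]

lemma NSC_im (z : ℂ) (x s : ℝ) :
    ((4 : ℂ) - z * x + wSC z * (s:ℂ)).im = -(z.im * x) + (wSC z).im * s := by
  simp [Complex.add_im, Complex.sub_im, Complex.mul_im]

lemma zeta_im (z : ℂ) : ((4:ℂ) - z^2).im = -(2 * z.re * z.im) := by
  simp [Complex.sub_im, sq, Complex.mul_im]; ring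

lemma NSC_slit (z : ℂ) (hz : 0 < z.im) (x : ℝ) (hx1 : -2 ≤ x) (hx2 : x ≤ 2) :
    (4 : ℂ) - z * x + wSC z * (Real.sqrt (4 - x^2) : ℂ) ∈ Complex.slitPlane := by
  set s : ℝ := Real.sqrt (4 - x^2) with hs
  have hs0 : 0 ≤ s := Real.sqrt_nonneg _
  have hwre := wSC_re z
  rw [Complex.mem_slitPlane_iff, NSC_re, NSC_im]
  by_cases ha : 2 ≤ z.re
  · have hwim : (wSC z).im < 0 := wSC_im_neg z (by rw [zeta_im]; nlinarith)
    by_cases hx0 : x ≤ 0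
    · left; nlinarith
    · right; push_neg at hx0; nlinarith
  · by_cases ha' : z.re ≤ -2
    · have hwim : 0 < (wSC z).im := wSC_im_pos z (by rw [zeta_im]; nlinarith)
      by_cases hx0 : 0 ≤ x
      · left; nlinarith
      · right; push_neg at hx0; nlinarith
    · push_neg at ha ha'
      left
      nlinarith [mul_nonneg hwre hs0, sq_nonneg (z.re - x), sq_nonneg (z.re + x)]

noncomputable def GSC (z : ℂ) (x : ℝ) : ℂ :=
  (Real.sqrt (4 - x^2) : ℂ) - z * (Real.arcsin (x/2) : ℂ)
    - wSC z * (Complex.log ((4 : ℂ) - z * x + wSC z * (Real.sqrt (4 - x^2) : ℂ))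
        - Complex.log ((x:ℂ) - z))

lemma sub_z_slit (z : ℂ) (hz : 0 < z.im) (x : ℝ) : (x:ℂ) - z ∈ Complex.slitPlane := by
  rw [Complex.mem_slitPlane_iff]
  right
  simp [Complex.sub_im]
  linarith

lemma GSC_deriv (z : ℂ) (hz : 0 < z.im) (x : ℝ) (hx1 : -2 < x) (hx2 : x < 2) :
    HasDerivAt (GSC z) ((Real.sqrt (4 - x^2) : ℂ) / ((x:ℂ) - z)) x := by
  set s : ℝ := Real.sqrt (4 - x^2) with hsdef
  have h4x : 0 < 4 - x^2 := by nlinarith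
  have hspos : 0 < s := Real.sqrt_pos.2 h4x
  have hs2 : s^2 = 4 - x^2 := Real.sq_sqrt h4x.le
  -- derivative of sqrt part
  have hinner : HasDerivAt (fun y : ℝ => 4 - y^2) (-(2*x)) x := by
    simpa using (hasDerivAt_pow 2 x).const_sub 4
  have h1 : HasDerivAt (fun y : ℝ => Real.sqrt (4 - y^2)) (-x/s) x := by
    have := (Real.hasDerivAt_sqrt h4x.ne').comp x hinner
    refine this.congr_deriv (Eq.symm ?_)
    field_simp
    ring
  have h1c : HasDerivAt (fun y : ℝ => (Real.sqrt (4 - y^2) : ℂ)) ((-x/s : ℝ) : ℂ) x :=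
    h1.ofReal_comp
  -- derivative of arcsin part
  have h2 : HasDerivAt (fun y : ℝ => Real.arcsin (y/2)) (1/s) x := by
    have hin : HasDerivAt (fun y : ℝ => y/2) (1/2) x := by
      simpa using (hasDerivAt_id x).div_const 2
    have hne1 : x/2 ≠ -1 := by intro h; nlinarith [h]
    have hne2 : x/2 ≠ 1 := by intro h; nlinarith [h]
    have := (Real.hasDerivAt_arcsin hne1 hne2).comp x hin
    refine this.congr_deriv (Eq.symm ?_)
    have hsq : Real.sqrt (1 - (x/2)^2) = s/2 := by
      have h4 : Real.sqrt 4 = 2 := by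
        rw [show (4:ℝ) = 2^2 by norm_num, Real.sqrt_sq (by norm_num : (0:ℝ) ≤ 2)]
      rw [show (1 : ℝ) - (x/2)^2 = (4 - x^2)/4 by ring, Real.sqrt_div h4x.le, h4]
    rw [hsq]
    field_simp
  have h2c : HasDerivAt (fun y : ℝ => z * (Real.arcsin (y/2) : ℂ)) (z * ((1/s : ℝ) : ℂ)) x :=
    h2.ofReal_comp.const_mul z
  -- derivative of N
  have hid : HasDerivAt (fun y : ℝ => (y:ℂ)) 1 x := by
    simpa using (hasDerivAt_id x).ofReal_comp
  have hN : HasDerivAt (fun y : ℝ => (4 : ℂ) - z * y + wSC z * (Real.sqrt (4 - y^2) : ℂ))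
      (-(z * 1) + wSC z * ((-x/s : ℝ) : ℂ)) x :=
    ((hid.const_mul z).const_sub 4).add (h1c.const_mul (wSC z))
  have hslit := NSC_slit z hz x hx1.le hx2.le
  have hlogN := hN.clog_real hslit
  have hD : HasDerivAt (fun y : ℝ => (y:ℂ) - z) 1 x := hid.sub_const z
  have hlogD := hD.clog_real (sub_z_slit z hz x)
  have hG := (h1c.sub h2c).sub ((hlogN.sub hlogD).const_mul (wSC z))
  refine hG.congr_deriv (Eq.symm ?_)
  -- algebra
  have hNne : (4 : ℂ) - z * x + wSC z * (s:ℂ) ≠ 0 := Complex.slitPlane_ne_zero hslit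
  have hxz : (x:ℂ) - z ≠ 0 := Complex.slitPlane_ne_zero (sub_z_slit z hz x)
  have hsC : (s:ℂ) ≠ 0 := by exact_mod_cast hspos.ne'
  have hs2C : (s:ℂ)^2 = 4 - (x:ℂ)^2 := by
    exact_mod_cast congrArg (fun t : ℝ => (t:ℂ)) hs2
  have hw2 : (wSC z)^2 = 4 - z^2 := wSC_sq z hz
  set W := wSC z
  have hNs : (-(z*1) + W * ((-x/s : ℝ):ℂ)) * (s:ℂ) = -(z*(s:ℂ)) - W*(x:ℂ) := by
    push_cast
    field_simp
    ring
  have key : (-(z * 1) + W * ((-x/s : ℝ):ℂ)) / ((4 : ℂ) - z * x + W * (s:ℂ)) - 1 / ((x:ℂ) - z)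
      = -W / ((s:ℂ) * ((x:ℂ) - z)) := by
    rw [div_sub_div _ _ hNne hxz, div_eq_div_iff (mul_ne_zero hNne hxz) (mul_ne_zero hsC hxz)]
    linear_combination ((x:ℂ) - z)^2 * hNs + ((x:ℂ)-z)*(s:ℂ) * hw2 - ((x:ℂ)-z)*W * hs2C
  rw [key]
  push_cast
  field_simp
  linear_combination hs2C - hw2

lemma sqrtC_cont : Continuous fun y : ℝ => (Real.sqrt (4 - y^2) : ℂ) :=
  Complex.continuous_ofReal.comp (Real.continuous_sqrt.comp (by continuity))

lemma GSC_cont (z : ℂ) (hz : 0 < z.im) : ContinuousOn (GSC z) (Set.Icc (-2 : ℝ) 2) := by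
  have cN : Continuous fun y : ℝ => (4 : ℂ) - z * y + wSC z * (Real.sqrt (4 - y^2) : ℂ) := by
    have := sqrtC_cont
    continuity
  have clogN : ContinuousOn (fun y : ℝ =>
      Complex.log ((4 : ℂ) - z * y + wSC z * (Real.sqrt (4 - y^2) : ℂ))) (Set.Icc (-2 : ℝ) 2) :=
    cN.continuousOn.clog fun x hx => NSC_slit z hz x hx.1 hx.2
  have clogD : ContinuousOn (fun y : ℝ => Complex.log ((y:ℂ) - z)) (Set.Icc (-2 : ℝ) 2) :=
    (Continuous.continuousOn (by continuity)).clog fun x _ => sub_z_slit z hz x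
  have carc : Continuous fun y : ℝ => z * (Real.arcsin (y/2) : ℂ) := by
    have : Continuous fun y : ℝ => Real.arcsin (y/2) :=
      Real.continuous_arcsin.comp (continuous_id.div_const 2)
    continuity
  exact ((sqrtC_cont.continuousOn.sub carc.continuousOn).sub
    (((clogN.sub clogD)).const_smul (wSC z)))

lemma integrand_cont (z : ℂ) (hz : 0 < z.im) :
    Continuous fun x : ℝ => (Real.sqrt (4 - x^2) : ℂ) / ((x:ℂ) - z) := by
  apply sqrtC_cont.div (by continuity)
  exact fun x => Complex.slitPlane_ne_zero (sub_z_slit z hz x)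

lemma GSC_integral (z : ℂ) (hz : 0 < z.im) :
    ∫ x in (-2:ℝ)..2, (Real.sqrt (4 - x^2) : ℂ) / ((x:ℂ) - z) = GSC z 2 - GSC z (-2) :=
  intervalIntegral.integral_eq_sub_of_hasDerivAt_of_le (by norm_num) (GSC_cont z hz)
    (fun x hx => GSC_deriv z hz x hx.1 hx.2)
    ((integrand_cont z hz).intervalIntegrable _ _)

lemma log_neg_of_im_pos (u : ℂ) (hu : 0 < u.im) :
    Complex.log (-u) = Complex.log u - Real.pi * Complex.I := by
  refine Complex.ext ?_ ?_
  · simp [Complex.log_re]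
  · simp [Complex.log_im, Complex.arg_neg_eq_arg_sub_pi_of_im_pos hu]

lemma GSC_two (z : ℂ) (hz : 0 < z.im) :
    GSC z 2 = -z * ((Real.pi/2 : ℝ) : ℂ) - wSC z * ((Real.log 2 : ℝ) : ℂ) := by
  have h0 : Real.sqrt (4 - (2:ℝ)^2) = 0 := by norm_num
  have hne : (2 : ℂ) - z ≠ 0 := by
    intro h
    have := congrArg Complex.im h
    simp at this
    linarith
  have hfac : (4 : ℂ) - z * (2:ℝ) = ((2:ℝ) : ℂ) * ((2 : ℂ) - z) := by push_cast; ring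
  rw [GSC, h0]
  push_cast
  rw [show (4 : ℂ) - z * 2 + wSC z * 0 = (4 : ℂ) - z * 2 by ring]
  rw [show (4 : ℂ) - z * 2 = ((2:ℝ) : ℂ) * ((2 : ℂ) - z) by push_cast; ring]
  rw [Complex.log_ofReal_mul (by norm_num) hne]
  rw [show ((2:ℝ)/2 : ℝ) = 1 by norm_num, Real.arcsin_one]
  push_cast
  ring

lemma GSC_neg_two (z : ℂ) (hz : 0 < z.im) :
    GSC z (-2) = z * ((Real.pi/2 : ℝ) : ℂ)
      - wSC z * (((Real.log 2 : ℝ) : ℂ) + Real.pi * Complex.I) := by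
  have h0 : Real.sqrt (4 - (-2:ℝ)^2) = 0 := by norm_num
  have hu : (0:ℝ) < ((2 : ℂ) + z).im := by simp; linarith
  have hne : (2 : ℂ) + z ≠ 0 := by
    intro h
    have := congrArg Complex.im h
    simp at this
    linarith
  rw [GSC, h0]
  push_cast
  rw [show (4 : ℂ) - z * (-2) + wSC z * 0 = ((2:ℝ) : ℂ) * ((2 : ℂ) + z) by push_cast; ring]
  rw [show (-2 : ℂ) - z = -((2:ℂ) + z) by ring]
  rw [Complex.log_ofReal_mul (by norm_num) hne, log_neg_of_im_pos _ hu]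
  rw [show ((-2:ℝ)/2 : ℝ) = -1 by norm_num, Real.arcsin_neg_one]
  push_cast
  ring

lemma mSC_eq (z : ℂ) (hz : 0 < z.im) : mSC z = (-z + Complex.I * wSC z) / 2 := by
  have h1 : mSC z = ∫ x in Set.Ioc (-2:ℝ) 2, (rhoSC x : ℂ) / ((x:ℂ) - z) := by
    rw [mSC]
    refine (setIntegral_eq_integral_of_forall_compl_eq_zero fun x hx => ?_).symm
    have hx' : x ≤ -2 ∨ 2 < x := by
      rcases le_or_gt x (-2) with h | h
      · exact Or.inl h
      · right
        by_contra hc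
        push_neg at hc
        exact hx ⟨h, hc⟩
    have hmax : max (4 - x^2) 0 = 0 := max_eq_right (by rcases hx' with h|h <;> nlinarith)
    simp [rhoSC, hmax]
  have h2 : (∫ x in (-2:ℝ)..2, (rhoSC x : ℂ) / ((x:ℂ) - z))
      = ∫ x in (-2:ℝ)..2, ((1/(2*Real.pi) : ℝ) : ℂ) * ((Real.sqrt (4 - x^2) : ℂ) / ((x:ℂ) - z)) := by
    apply intervalIntegral.integral_congr
    intro x hx
    rw [Set.uIcc_of_le (by norm_num : (-2:ℝ) ≤ 2)] at hx
    have hmax : max (4 - x^2) 0 = 4 - x^2 := max_eq_left (by nlinarith [hx.1, hx.2])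
    simp only [rhoSC, hmax]
    push_cast
    ring
  rw [h1, ← intervalIntegral.integral_of_le (by norm_num : (-2:ℝ) ≤ 2), h2,
    intervalIntegral.integral_const_mul, GSC_integral z hz, GSC_two z hz, GSC_neg_two z hz]
  have hπ : (Real.pi : ℂ) ≠ 0 := by exact_mod_cast Real.pi_ne_zero
  push_cast
  field_simp
  ring

/-- The Stieltjes transform of the semicircle law satisfies the self-consistent
equation `1 + z·m_sc(z) + m_sc(z)² = 0` on the upper half-plane. -/
theorem mSC_self_consistent (z : ℂ) (hz : 0 < z.im) :
    1 + z * mSC z + (mSC z) ^ 2 = 0 := by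
  have hw2 := wSC_sq z hz
  rw [mSC_eq z hz]
  linear_combination (wSC z^2/4) * Complex.I_sq - (1/4) * hw2
end

section
/- Let z = E + iη with |E| ≤ 5 and 0 < η ≤ 10, and let κ = min{|E-2|, |E+2|}. Then there exist positive constants c, C (independent of z in this domain) such that: if E ∈ [-2,2] then c√(κ+η) ≤ Im m_sc(z) ≤ C√(κ+η), and if |E| > 2 then c·η/√(κ+η) ≤ Im m_sc(z) ≤ C·η/√(κ+η). -/
open MeasureTheory

noncomputable def gI (E η : ℝ) : ℝ := ∫ x : ℝ, rhoSC x * (η / ((x - E)^2 + η^2))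

lemma rhoSC_nonneg (x : ℝ) : 0 ≤ rhoSC x := by
  unfold rhoSC
  positivity

lemma rhoSC_eq_zero {x : ℝ} (h : 2 ≤ |x|) : rhoSC x = 0 := by
  have h4 : 4 - x ^ 2 ≤ 0 := by
    have : (2:ℝ)^2 ≤ |x|^2 := by nlinarith [abs_nonneg x]
    rw [sq_abs] at this; linarith
  unfold rhoSC
  rw [max_eq_right h4, Real.sqrt_zero, mul_zero]

lemma rhoSC_le (x : ℝ) : rhoSC x ≤ 1 / Real.pi := by
  unfold rhoSC
  have h1 : Real.sqrt (max (4 - x ^ 2) 0) ≤ 2 := by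
    rw [show (2:ℝ) = Real.sqrt 4 by rw [show (4:ℝ) = 2^2 by norm_num, Real.sqrt_sq (by norm_num)]]
    apply Real.sqrt_le_sqrt
    rcases le_total (4 - x^2) 0 with h | h
    · rw [max_eq_right h]; norm_num
    · rw [max_eq_left h]; nlinarith
  have hπ : 0 < Real.pi := Real.pi_pos
  calc 1 / (2*Real.pi) * Real.sqrt (max (4 - x ^ 2) 0) ≤ 1 / (2*Real.pi) * 2 := by
        apply mul_le_mul_of_nonneg_left h1; positivity
    _ = 1 / Real.pi := by field_simp
lemma rhoSC_continuous : Continuous rhoSC := by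
  unfold rhoSC
  exact continuous_const.mul (Real.continuous_sqrt.comp ((continuous_const.sub (continuous_pow 2)).max continuous_const))

lemma g_cont {E η : ℝ} (hη : 0 < η) :
    Continuous (fun x : ℝ => rhoSC x * (η / ((x - E)^2 + η^2))) := by
  apply rhoSC_continuous.mul
  apply continuous_const.div
  · fun_prop
  · intro x; positivity

lemma g_integrable {E η : ℝ} (hη : 0 < η) :
    Integrable (fun x : ℝ => rhoSC x * (η / ((x - E)^2 + η^2))) := by
  apply (g_cont hη).integrable_of_hasCompactSupport
  apply HasCompactSupport.intro (isCompact_Icc (a := (-2:ℝ)) (b := 2))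
  intro x hx
  have : 2 < |x| := by
    simp only [Set.mem_Icc, not_and_or, not_le] at hx
    rcases hx with h | h
    · rw [abs_of_neg (by linarith)]; linarith
    · rw [abs_of_pos (by linarith)]; linarith
  rw [rhoSC_eq_zero this.le, zero_mul]

lemma im_mSC_eq {E η : ℝ} (hη : 0 < η) :
    (mSC (E + η * Complex.I)).im = gI E η := by
  unfold gI
  set z : ℂ := E + η * Complex.I with hz
  have hcont : Continuous (fun x : ℝ => (rhoSC x : ℂ) / ((x : ℂ) - z)) := by
    apply Continuous.div
    · exact Complex.continuous_ofReal.comp rhoSC_continuous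
    · fun_prop
    · intro x
      intro h
      have : ((x : ℂ) - z).im = 0 := by rw [h]; simp
      simp [hz] at this
      linarith
  have hsupp : HasCompactSupport (fun x : ℝ => (rhoSC x : ℂ) / ((x : ℂ) - z)) := by
    apply HasCompactSupport.intro (isCompact_Icc (a := (-2:ℝ)) (b := 2))
    intro x hx
    have : 2 < |x| := by
      simp only [Set.mem_Icc, not_and_or, not_le] at hx
      rcases hx with h | h
      · rw [abs_of_neg (by linarith)]; linarith
      · rw [abs_of_pos (by linarith)]; linarith
    rw [rhoSC_eq_zero this.le]
    simp
  have hint : Integrable (fun x : ℝ => (rhoSC x : ℂ) / ((x : ℂ) - z)) :=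
    hcont.integrable_of_hasCompactSupport hsupp
  rw [mSC, show (∫ x : ℝ, (rhoSC x : ℂ) / ((x : ℂ) - z)).im
      = RCLike.im (∫ x : ℝ, (rhoSC x : ℂ) / ((x : ℂ) - z)) from rfl,
    ← integral_im hint]
  congr 1
  ext x
  rw [show RCLike.im ((rhoSC x : ℂ) / ((x : ℂ) - z)) = ((rhoSC x : ℂ) / ((x : ℂ) - z)).im from rfl,
    Complex.div_im]
  simp only [hz]
  simp only [Complex.ofReal_im, Complex.ofReal_re, Complex.sub_re, Complex.sub_im,
    Complex.add_re, Complex.add_im, Complex.mul_re, Complex.mul_im, Complex.I_re, Complex.I_im,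
    Complex.normSq_apply]
  ring_nf

lemma g_nonneg {E η : ℝ} (hη : 0 < η) (x : ℝ) :
    0 ≤ rhoSC x * (η / ((x - E)^2 + η^2)) := by
  have := rhoSC_nonneg x
  positivity

/-- generic lower bound via a subinterval -/
lemma gI_lower {E η : ℝ} (hη : 0 < η) {a b c0 : ℝ} (hab : a ≤ b)
    (h : ∀ x ∈ Set.Icc a b, c0 ≤ rhoSC x * (η / ((x - E)^2 + η^2))) :
    c0 * (b - a) ≤ gI E η := by
  unfold gI
  have h1 : c0 * (b - a) ≤ ∫ x in Set.Icc a b, rhoSC x * (η / ((x - E)^2 + η^2)) := by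
    have := setIntegral_ge_of_const_le (μ := volume) (s := Set.Icc a b)
      measurableSet_Icc (by simp) h ((g_integrable hη).integrableOn)
    simpa [Real.volume_Icc, ENNReal.toReal_ofReal (sub_nonneg.2 hab), max_eq_left (sub_nonneg.2 hab), mul_comm] using this
  exact h1.trans (setIntegral_le_integral (g_integrable hη)
    (Filter.Eventually.of_forall (g_nonneg hη)))

/-- restrict to `[-2,2]` -/
lemma gI_eq_interval {E η : ℝ} (hη : 0 < η) :
    gI E η
      = ∫ x in (-2:ℝ)..2, rhoSC x * (η / ((x - E)^2 + η^2)) := by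
  unfold gI
  rw [intervalIntegral.integral_of_le (by norm_num : (-2:ℝ) ≤ 2)]
  rw [← setIntegral_eq_integral_of_forall_compl_eq_zero (s := Set.Ioc (-2:ℝ) 2)]
  intro x hx
  have : 2 ≤ |x| := by
    simp only [Set.mem_Ioc, not_and_or, not_lt, not_le] at hx
    rcases hx with h | h
    · rw [abs_of_nonpos (by linarith)]; linarith
    · rw [abs_of_pos (by linarith)]; linarith
  rw [rhoSC_eq_zero this, zero_mul]

lemma rpow_neg_two_eq {t : ℝ} (ht : 0 < t) : t ^ (-2 : ℝ) = (t^2)⁻¹ := by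
  rw [Real.rpow_neg ht.le, show ((2:ℝ)) = ((2:ℕ):ℝ) by norm_num, Real.rpow_natCast]

lemma rpow_neg_three_halves_eq {t : ℝ} (ht : 0 < t) :
    t ^ (-(3:ℝ)/2) = Real.sqrt t / t^2 := by
  have h1 : (-(3:ℝ)/2) = (1/2 : ℝ) + (-2 : ℝ) := by norm_num
  rw [h1, Real.rpow_add ht, ← Real.sqrt_eq_rpow, rpow_neg_two_eq ht, div_eq_mul_inv]

lemma notMem_uIcc {a b : ℝ} (ha : 0 < a) (hab : a ≤ b) : (0:ℝ) ∉ Set.uIcc a b := by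
  rw [Set.uIcc_of_le hab]
  intro h0
  exact absurd (Set.mem_Icc.1 h0).1 (by linarith)

lemma calcA {η s : ℝ} (hη : 0 < η) (hηs : η ≤ s) (hs : s ≤ 3) :
    ∫ t in (0:ℝ)..7, Real.sqrt (s+t) * (η/(t^2+η^2)) ≤ 6 * Real.sqrt s := by
  have hs0 : 0 < s := lt_of_lt_of_le hη hηs
  have hcont : Continuous (fun t : ℝ => Real.sqrt (s+t) * (η/(t^2+η^2))) := by
    apply Continuous.mul
    · exact Real.continuous_sqrt.comp (by fun_prop)
    · apply continuous_const.div (by fun_prop)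
      intro t; positivity
  have hii : ∀ a b : ℝ, IntervalIntegrable (fun t : ℝ => Real.sqrt (s+t) * (η/(t^2+η^2)))
      volume a b := fun a b => hcont.intervalIntegrable a b
  have hsplit : (∫ t in (0:ℝ)..7, Real.sqrt (s+t) * (η/(t^2+η^2)))
      = (∫ t in (0:ℝ)..η, Real.sqrt (s+t) * (η/(t^2+η^2)))
      + (∫ t in η..s, Real.sqrt (s+t) * (η/(t^2+η^2)))
      + (∫ t in s..7, Real.sqrt (s+t) * (η/(t^2+η^2))) := by
    rw [intervalIntegral.integral_add_adjacent_intervals (hii 0 η) (hii η s),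
      intervalIntegral.integral_add_adjacent_intervals (hii 0 s) (hii s 7)]
  rw [hsplit]
  have sqrt2s : Real.sqrt (2*s) ≤ Real.sqrt 2 * Real.sqrt s := by
    rw [Real.sqrt_mul (by norm_num)]
  -- piece 1
  have p1 : (∫ t in (0:ℝ)..η, Real.sqrt (s+t) * (η/(t^2+η^2)))
      ≤ Real.sqrt 2 * Real.sqrt s := by
    have h : (∫ t in (0:ℝ)..η, Real.sqrt (s+t) * (η/(t^2+η^2)))
        ≤ ∫ _t in (0:ℝ)..η, (Real.sqrt (2*s) / η) := by
      apply intervalIntegral.integral_mono_on hη.le (hii 0 η) intervalIntegrable_const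
      intro t ht
      obtain ⟨ht0, htη⟩ := ht
      have h1 : Real.sqrt (s+t) ≤ Real.sqrt (2*s) := Real.sqrt_le_sqrt (by linarith)
      have h2 : η/(t^2+η^2) ≤ 1/η := by
        rw [div_le_div_iff₀ (by positivity) hη]
        nlinarith
      calc Real.sqrt (s+t) * (η/(t^2+η^2)) ≤ Real.sqrt (2*s) * (1/η) :=
            mul_le_mul h1 h2 (by positivity) (Real.sqrt_nonneg _)
        _ = Real.sqrt (2*s) / η := by ring
    rw [intervalIntegral.integral_const, smul_eq_mul] at h
    calc (∫ t in (0:ℝ)..η, Real.sqrt (s+t) * (η/(t^2+η^2)))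
        ≤ (η - 0) * (Real.sqrt (2*s)/η) := h
      _ = Real.sqrt (2*s) := by rw [sub_zero]; field_simp
      _ ≤ Real.sqrt 2 * Real.sqrt s := sqrt2s
  -- piece 2
  have p2 : (∫ t in η..s, Real.sqrt (s+t) * (η/(t^2+η^2)))
      ≤ Real.sqrt 2 * Real.sqrt s := by
    have hne : (0:ℝ) ∉ Set.uIcc η s := notMem_uIcc hη hηs
    have hmono : (∫ t in η..s, Real.sqrt (s+t) * (η/(t^2+η^2)))
        ≤ ∫ t in η..s, (Real.sqrt (2*s) * η) * t ^ (-2:ℝ) := by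
      apply intervalIntegral.integral_mono_on hηs (hii η s)
        ((intervalIntegral.intervalIntegrable_rpow (r := -2) (Or.inr hne)).const_mul _)
      intro t ht
      obtain ⟨ht1, ht2⟩ := ht
      have ht0 : 0 < t := lt_of_lt_of_le hη ht1
      have h1 : Real.sqrt (s+t) ≤ Real.sqrt (2*s) := Real.sqrt_le_sqrt (by linarith)
      have h2 : η/(t^2+η^2) ≤ η * t^(-2:ℝ) := by
        rw [rpow_neg_two_eq ht0, ← div_eq_mul_inv]
        exact div_le_div_of_nonneg_left hη.le (by positivity) (by nlinarith)
      calc Real.sqrt (s+t) * (η/(t^2+η^2)) ≤ Real.sqrt (2*s) * (η * t^(-2:ℝ)) :=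
            mul_le_mul h1 h2 (by positivity) (Real.sqrt_nonneg _)
        _ = (Real.sqrt (2*s) * η) * t ^ (-2:ℝ) := by ring
    rw [intervalIntegral.integral_const_mul,
      integral_rpow (Or.inr ⟨by norm_num, hne⟩)] at hmono
    have heval : (s ^ (-2 + 1 : ℝ) - η ^ (-2 + 1 : ℝ)) / (-2 + 1 : ℝ) = 1/η - 1/s := by
      rw [show (-2 + 1 : ℝ) = -1 by norm_num, Real.rpow_neg_one, Real.rpow_neg_one]
      field_simp
      ring
    rw [heval] at hmono
    have h2 : Real.sqrt (2*s) * η * (1/η - 1/s) ≤ Real.sqrt (2*s) := by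
      have hinv : 0 < 1/s := by positivity
      have : Real.sqrt (2*s) * η * (1/η - 1/s) ≤ Real.sqrt (2*s) * η * (1/η) := by
        apply mul_le_mul_of_nonneg_left (by linarith) (by positivity)
      calc Real.sqrt (2*s) * η * (1/η - 1/s) ≤ Real.sqrt (2*s) * η * (1/η) := this
        _ = Real.sqrt (2*s) := by field_simp
    exact hmono.trans (h2.trans sqrt2s)
  -- piece 3
  have p3 : (∫ t in s..7, Real.sqrt (s+t) * (η/(t^2+η^2)))
      ≤ 2 * Real.sqrt 2 * Real.sqrt s := by
    have hs7 : s ≤ 7 := by linarith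
    have hne : (0:ℝ) ∉ Set.uIcc s 7 := notMem_uIcc hs0 hs7
    have hmono : (∫ t in s..7, Real.sqrt (s+t) * (η/(t^2+η^2)))
        ≤ ∫ t in s..7, (Real.sqrt 2 * η) * t ^ (-(3:ℝ)/2) := by
      apply intervalIntegral.integral_mono_on hs7 (hii s 7)
        ((intervalIntegral.intervalIntegrable_rpow (r := -(3:ℝ)/2) (Or.inr hne)).const_mul _)
      intro t ht
      obtain ⟨ht1, ht2⟩ := ht
      have ht0 : 0 < t := lt_of_lt_of_le hs0 ht1
      have h1 : Real.sqrt (s+t) ≤ Real.sqrt 2 * Real.sqrt t := by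
        rw [← Real.sqrt_mul (by norm_num)]
        exact Real.sqrt_le_sqrt (by linarith)
      have h2 : η/(t^2+η^2) ≤ η / t^2 :=
        div_le_div_of_nonneg_left hη.le (by positivity) (by nlinarith)
      calc Real.sqrt (s+t) * (η/(t^2+η^2))
          ≤ (Real.sqrt 2 * Real.sqrt t) * (η / t^2) :=
            mul_le_mul h1 h2 (by positivity) (by positivity)
        _ = (Real.sqrt 2 * η) * (Real.sqrt t / t^2) := by ring
        _ = (Real.sqrt 2 * η) * t ^ (-(3:ℝ)/2) := by rw [rpow_neg_three_halves_eq ht0]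
    rw [intervalIntegral.integral_const_mul,
      integral_rpow (Or.inr ⟨by norm_num, hne⟩)] at hmono
    have heval : (7 ^ (-(3:ℝ)/2 + 1) - s ^ (-(3:ℝ)/2 + 1)) / (-(3:ℝ)/2 + 1)
        = 2 * (s ^ (-(1:ℝ)/2) - 7 ^ (-(1:ℝ)/2)) := by
      rw [show (-(3:ℝ)/2 + 1) = -(1:ℝ)/2 by norm_num]
      ring
    rw [heval] at hmono
    have h7 : (0:ℝ) ≤ 7 ^ (-(1:ℝ)/2) := Real.rpow_nonneg (by norm_num) _
    have hsinv : s ^ (-(1:ℝ)/2) = 1 / Real.sqrt s := by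
      rw [show (-(1:ℝ)/2) = -(1/2 : ℝ) by norm_num, Real.rpow_neg hs0.le,
        ← Real.sqrt_eq_rpow, one_div]
    have hss : 0 < Real.sqrt s := Real.sqrt_pos.2 hs0
    have h1 : Real.sqrt 2 * η * (2 * (s ^ (-(1:ℝ)/2) - 7 ^ (-(1:ℝ)/2)))
        ≤ Real.sqrt 2 * η * (2 * (1 / Real.sqrt s)) := by
      apply mul_le_mul_of_nonneg_left _ (by positivity)
      rw [hsinv]; linarith
    have h2 : Real.sqrt 2 * η * (2 * (1 / Real.sqrt s)) ≤ 2 * Real.sqrt 2 * Real.sqrt s := by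
      rw [show Real.sqrt 2 * η * (2 * (1 / Real.sqrt s))
          = 2 * Real.sqrt 2 * (η / Real.sqrt s) by ring]
      apply mul_le_mul_of_nonneg_left _ (by positivity)
      rw [div_le_iff₀ hss, Real.mul_self_sqrt hs0.le]
      exact hηs
    exact hmono.trans (h1.trans h2)
  have hsqrt2 : Real.sqrt 2 ≤ 1.5 := by
    rw [show (1.5:ℝ) = Real.sqrt (1.5^2) by rw [Real.sqrt_sq]; norm_num]
    exact Real.sqrt_le_sqrt (by norm_num)
  nlinarith [Real.sqrt_nonneg s, p1, p2, p3]

lemma calcB {η κ s : ℝ} (hη : 0 < η) (hκ : 0 ≤ κ) (hs : s = κ + η) (hs13 : s ≤ 13) :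
    ∫ u in (0:ℝ)..4, Real.sqrt u * (η/((κ+u)^2+η^2)) ≤ 6 * η / Real.sqrt s := by
  have hs0 : 0 < s := by rw [hs]; positivity
  have hηs : η ≤ s := by rw [hs]; linarith
  have hκs : κ ≤ s := by rw [hs]; linarith
  set m : ℝ := min s 4 with hm
  have hm0 : 0 < m := lt_min hs0 (by norm_num)
  have hm4 : m ≤ 4 := min_le_right _ _
  have hms : m ≤ s := min_le_left _ _
  have hm13 : 4 * s ≤ 13 * m := by
    rcases le_total s 4 with h | h
    · rw [hm, min_eq_left h]; linarith
    · rw [hm, min_eq_right h]; linarith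
  have hss : 0 < Real.sqrt s := Real.sqrt_pos.2 hs0
  have hmss : 0 < Real.sqrt m := Real.sqrt_pos.2 hm0
  have hcont : Continuous (fun u : ℝ => Real.sqrt u * (η/((κ+u)^2+η^2))) := by
    apply Continuous.mul Real.continuous_sqrt
    apply continuous_const.div (by fun_prop)
    intro u; positivity
  have hii : ∀ a b : ℝ, IntervalIntegrable (fun u : ℝ => Real.sqrt u * (η/((κ+u)^2+η^2)))
      volume a b := fun a b => hcont.intervalIntegrable a b
  have hsplit : (∫ u in (0:ℝ)..4, Real.sqrt u * (η/((κ+u)^2+η^2)))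
      = (∫ u in (0:ℝ)..m, Real.sqrt u * (η/((κ+u)^2+η^2)))
      + (∫ u in m..4, Real.sqrt u * (η/((κ+u)^2+η^2))) := by
    rw [intervalIntegral.integral_add_adjacent_intervals (hii 0 m) (hii m 4)]
  rw [hsplit]
  -- piece 1
  have p1 : (∫ u in (0:ℝ)..m, Real.sqrt u * (η/((κ+u)^2+η^2))) ≤ 2 * η / Real.sqrt s := by
    have h : (∫ u in (0:ℝ)..m, Real.sqrt u * (η/((κ+u)^2+η^2)))
        ≤ ∫ _u in (0:ℝ)..m, (Real.sqrt s * (2*η/s^2)) := by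
      apply intervalIntegral.integral_mono_on hm0.le (hii 0 m) intervalIntegrable_const
      intro u hu
      obtain ⟨hu0, hum⟩ := hu
      have h1 : Real.sqrt u ≤ Real.sqrt s := Real.sqrt_le_sqrt (by linarith)
      have h2 : η/((κ+u)^2+η^2) ≤ 2*η/s^2 := by
        rw [div_le_div_iff₀ (by positivity) (by positivity)]
        have hkey : s^2 ≤ 2*((κ+u)^2+η^2) := by
          rw [hs]
          nlinarith [sq_nonneg (κ-η), mul_nonneg hu0 (by linarith : (0:ℝ) ≤ 2*κ+u)]
        nlinarith
      exact mul_le_mul h1 h2 (by positivity) (Real.sqrt_nonneg _)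
    rw [intervalIntegral.integral_const, smul_eq_mul, sub_zero] at h
    have heq : s * (Real.sqrt s * (2*η/s^2)) = 2*η/Real.sqrt s := by
      set a := Real.sqrt s with hA
      have has : a * a = s := Real.mul_self_sqrt hs0.le
      have ha0 : a ≠ 0 := hss.ne'
      rw [← has]
      field_simp
    have h2 : m * (Real.sqrt s * (2*η/s^2)) ≤ s * (Real.sqrt s * (2*η/s^2)) :=
      mul_le_mul_of_nonneg_right hms (by positivity)
    calc (∫ u in (0:ℝ)..m, Real.sqrt u * (η/((κ+u)^2+η^2)))
        ≤ m * (Real.sqrt s * (2*η/s^2)) := h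
      _ ≤ s * (Real.sqrt s * (2*η/s^2)) := h2
      _ = 2*η/Real.sqrt s := heq
  -- piece 2
  have p2 : (∫ u in m..4, Real.sqrt u * (η/((κ+u)^2+η^2))) ≤ Real.sqrt 13 * η / Real.sqrt s := by
    have hne : (0:ℝ) ∉ Set.uIcc m 4 := notMem_uIcc hm0 hm4
    have hmono : (∫ u in m..4, Real.sqrt u * (η/((κ+u)^2+η^2)))
        ≤ ∫ u in m..4, η * u ^ (-(3:ℝ)/2) := by
      apply intervalIntegral.integral_mono_on hm4 (hii m 4)
        ((intervalIntegral.intervalIntegrable_rpow (r := -(3:ℝ)/2) (Or.inr hne)).const_mul _)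
      intro u hu
      obtain ⟨hu1, hu2⟩ := hu
      have hu0 : 0 < u := lt_of_lt_of_le hm0 hu1
      have h2 : η/((κ+u)^2+η^2) ≤ η / u^2 :=
        div_le_div_of_nonneg_left hη.le (by positivity) (by nlinarith)
      calc Real.sqrt u * (η/((κ+u)^2+η^2)) ≤ Real.sqrt u * (η / u^2) :=
            mul_le_mul_of_nonneg_left h2 (Real.sqrt_nonneg _)
        _ = η * (Real.sqrt u / u^2) := by ring
        _ = η * u ^ (-(3:ℝ)/2) := by rw [rpow_neg_three_halves_eq hu0]
    rw [intervalIntegral.integral_const_mul,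
      integral_rpow (Or.inr ⟨by norm_num, hne⟩)] at hmono
    have heval : ((4:ℝ) ^ (-(3:ℝ)/2 + 1) - m ^ (-(3:ℝ)/2 + 1)) / (-(3:ℝ)/2 + 1)
        = 2 * (m ^ (-(1:ℝ)/2) - 4 ^ (-(1:ℝ)/2)) := by
      rw [show (-(3:ℝ)/2 + 1) = -(1:ℝ)/2 by norm_num]
      ring
    rw [heval] at hmono
    have h4 : (0:ℝ) ≤ (4:ℝ) ^ (-(1:ℝ)/2) := Real.rpow_nonneg (by norm_num) _
    have hminv : m ^ (-(1:ℝ)/2) = 1 / Real.sqrt m := by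
      rw [show (-(1:ℝ)/2) = -(1/2 : ℝ) by norm_num, Real.rpow_neg hm0.le,
        ← Real.sqrt_eq_rpow, one_div]
    have hb : η * (2 * (m ^ (-(1:ℝ)/2) - 4 ^ (-(1:ℝ)/2))) ≤ 2 * η / Real.sqrt m := by
      rw [hminv, show 2 * η / Real.sqrt m = η * (2 * (1/Real.sqrt m)) by ring]
      nlinarith [mul_nonneg hη.le h4]
    have hcmp : 2 * η / Real.sqrt m ≤ Real.sqrt 13 * η / Real.sqrt s := by
      rw [div_le_div_iff₀ hmss hss]
      have hsq : Real.sqrt (4*s) ≤ Real.sqrt (13*m) := Real.sqrt_le_sqrt (by linarith)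
      rw [show (4:ℝ)*s = 2^2*s by norm_num, Real.sqrt_mul (by norm_num), Real.sqrt_mul (by norm_num),
        Real.sqrt_sq (by norm_num : (0:ℝ) ≤ 2)] at hsq
      nlinarith [mul_le_mul_of_nonneg_left hsq hη.le]
    exact hmono.trans (hb.trans hcmp)
  have h13 : Real.sqrt 13 ≤ 4 := by
    rw [show (4:ℝ) = Real.sqrt 16 by rw [show (16:ℝ) = 4^2 by norm_num, Real.sqrt_sq]; norm_num]
    exact Real.sqrt_le_sqrt (by norm_num)
  have hfin : 2 * η / Real.sqrt s + Real.sqrt 13 * η / Real.sqrt s ≤ 6 * η / Real.sqrt s := by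
    rw [← add_div, div_le_div_iff₀ hss hss]
    nlinarith [mul_le_mul_of_nonneg_right h13 hη.le, Real.mul_self_sqrt hs0.le, hss]
  linarith [p1, p2, hfin]

lemma rhoSC_even (x : ℝ) : rhoSC (-x) = rhoSC x := by
  unfold rhoSC; ring_nf

lemma gI_neg (E η : ℝ) : gI E η = gI (-E) η := by
  unfold gI
  rw [← integral_neg_eq_self (fun x : ℝ => rhoSC x * (η / ((x - -E)^2 + η^2))) volume]
  congr 1
  funext x
  rw [rhoSC_even]
  ring_nf

lemma rhoSC_ge {x c : ℝ} (hc : 0 ≤ c) (h : c ≤ 4 - x^2) :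
    (1 / (2 * Real.pi)) * Real.sqrt c ≤ rhoSC x := by
  unfold rhoSC
  have hπ : 0 < Real.pi := Real.pi_pos
  apply mul_le_mul_of_nonneg_left _ (by positivity)
  exact Real.sqrt_le_sqrt (le_max_of_le_left h)

lemma kernel_ge {E η x D : ℝ} (hη : 0 < η) (hD : (x-E)^2 + η^2 ≤ D) :
    η / D ≤ η / ((x-E)^2 + η^2) :=
  div_le_div_of_nonneg_left hη.le (by positivity) hD

lemma lowerA {E η : ℝ} (hE0 : 0 ≤ E) (hE2 : E ≤ 2) (hη : 0 < η) (hη10 : η ≤ 10) :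
    (1/10000) * Real.sqrt (2 - E + η) ≤ gI E η := by
  set s : ℝ := 2 - E + η with hs
  have hs0 : 0 < s := by rw [hs]; linarith
  have hss : 0 < Real.sqrt s := Real.sqrt_pos.2 hs0
  have hπ : 0 < Real.pi := Real.pi_pos
  have hπ4 : Real.pi ≤ 4 := by linarith [Real.pi_le_four]
  rcases lt_or_ge η 1 with hη1 | hη1
  · -- small eta : J = [E-η, E-η/2]
    have key : ((1 / (2 * Real.pi)) * Real.sqrt (s/2) * (1/(2*η))) * ((E - η/2) - (E - η))
        ≤ gI E η := by
      apply gI_lower hη (by linarith)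
      intro x hx
      obtain ⟨hx1, hx2⟩ := hx
      have hρ : (1 / (2 * Real.pi)) * Real.sqrt (s/2) ≤ rhoSC x := by
        apply rhoSC_ge (by positivity)
        nlinarith
      have hk : 1/(2*η) ≤ η / ((x-E)^2 + η^2) := by
        have : η / (2*η^2) ≤ η / ((x-E)^2 + η^2) := kernel_ge hη (by nlinarith)
        calc 1/(2*η) = η/(2*η^2) := by field_simp
          _ ≤ _ := this
      exact mul_le_mul hρ hk (by positivity) (rhoSC_nonneg x)
    have hlen : ((E - η/2) - (E - η)) = η/2 := by ring
    rw [hlen] at key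
    refine le_trans ?_ key
    -- (1/10000) √s ≤ (1/(2π)) √(s/2) (1/(2η)) (η/2)
    have h2 : Real.sqrt (s/2) = Real.sqrt s / Real.sqrt 2 := Real.sqrt_div hs0.le 2
    have hsqrt2 : Real.sqrt 2 ≤ 1.5 := by
      rw [show (1.5:ℝ) = Real.sqrt (1.5^2) by rw [Real.sqrt_sq]; norm_num]
      exact Real.sqrt_le_sqrt (by norm_num)
    have hsqrt2' : (0:ℝ) < Real.sqrt 2 := by positivity
    rw [h2]
    have heq : 1 / (2 * Real.pi) * (Real.sqrt s / Real.sqrt 2) * (1/(2*η)) * (η/2)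
        = (1/(8 * Real.pi * Real.sqrt 2)) * Real.sqrt s := by
      field_simp
      ring
    rw [heq]
    have hden : 8*Real.pi*Real.sqrt 2 ≤ 10000 := by nlinarith
    have h3 : (1:ℝ)/10000 ≤ 1/(8*Real.pi*Real.sqrt 2) :=
      one_div_le_one_div_of_le (by positivity) hden
    exact mul_le_mul_of_nonneg_right h3 hss.le
  · -- big eta : J = [-1, 0]
    have key : ((1 / (2 * Real.pi)) * 1 * (η/109)) * ((0:ℝ) - (-1)) ≤ gI E η := by
      apply gI_lower hη (by norm_num)
      intro x hx
      obtain ⟨hx1, hx2⟩ := hx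
      have hρ : (1 / (2 * Real.pi)) * 1 ≤ rhoSC x := by
        have h := rhoSC_ge (x := x) (c := 1) (by norm_num) (by nlinarith)
        simpa using h
      have hk : η/109 ≤ η / ((x-E)^2 + η^2) := kernel_ge hη (by nlinarith)
      exact mul_le_mul hρ hk (by positivity) (rhoSC_nonneg x)
    refine le_trans ?_ key
    have hsle : Real.sqrt s ≤ 4 := by
      rw [show (4:ℝ) = Real.sqrt 16 by
        rw [show (16:ℝ) = 4^2 by norm_num, Real.sqrt_sq]; norm_num]
      exact Real.sqrt_le_sqrt (by simp only [hs]; linarith)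
    have heq : (1 / (2 * Real.pi)) * 1 * (η/109) * ((0:ℝ) - (-1)) = η/(218*Real.pi) := by ring
    rw [heq]
    have h1 : (1/10000)*Real.sqrt s ≤ 4/10000 := by nlinarith
    have h2 : (4:ℝ)/10000 ≤ η/(218*Real.pi) := by
      rw [div_le_div_iff₀ (by norm_num) (by positivity)]
      nlinarith
    linarith

lemma lowerB {E η : ℝ} (hE2 : 2 < E) (hE5 : E ≤ 5) (hη : 0 < η) (hη10 : η ≤ 10) :
    (1/10000) * η / Real.sqrt (E - 2 + η) ≤ gI E η := by
  set s : ℝ := E - 2 + η with hs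
  have hs0 : 0 < s := by rw [hs]; linarith
  have hηs : η ≤ s := by rw [hs]; linarith
  have hs13 : s ≤ 13 := by rw [hs]; linarith
  have hss : 0 < Real.sqrt s := Real.sqrt_pos.2 hs0
  have hπ : 0 < Real.pi := Real.pi_pos
  have hπ4 : Real.pi ≤ 4 := by linarith [Real.pi_le_four]
  set t : ℝ := min s 4 with ht
  have ht0 : 0 < t := lt_min hs0 (by norm_num)
  have ht4 : t ≤ 4 := min_le_right _ _
  have hts : t ≤ s := min_le_left _ _
  have ht13 : 4 * s ≤ 13 * t := by
    rcases le_total s 4 with h | h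
    · rw [ht, min_eq_left h]; linarith
    · rw [ht, min_eq_right h]; linarith
  have key : ((1 / (2 * Real.pi)) * Real.sqrt (s/7) * (η/(5*s^2)))
      * ((2 - t/2) - (2 - 3*t/4)) ≤ gI E η := by
    apply gI_lower hη (by linarith)
    intro x hx
    obtain ⟨hx1, hx2⟩ := hx
    have hρ : (1 / (2 * Real.pi)) * Real.sqrt (s/7) ≤ rhoSC x := by
      apply rhoSC_ge (by positivity)
      have h1 : t/2 ≤ 2 - x := by linarith
      have h2 : (1:ℝ) ≤ 2 + x := by linarith
      have hprod : (t/2) * 1 ≤ (2-x)*(2+x) :=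
        mul_le_mul h1 h2 (by norm_num) (by linarith)
      nlinarith
    have hk : η/(5*s^2) ≤ η / ((x-E)^2 + η^2) := by
      apply kernel_ge hη
      have h3 : E - x ≤ 2*s := by
        have : E - 2 ≤ s := by rw [hs]; linarith
        have h4 : 2 - x ≤ 3*t/4 := by linarith
        linarith
      have h4 : 0 ≤ E - x := by linarith
      have h5 : (E-x)*(E-x) ≤ (2*s)*(2*s) := mul_le_mul h3 h3 h4 (by positivity)
      nlinarith
    exact mul_le_mul hρ hk (by positivity) (rhoSC_nonneg x)
  have hlen : ((2 - t/2) - (2 - 3*t/4)) = t/4 := by ring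
  rw [hlen] at key
  refine le_trans ?_ key
  have hc0 : 0 ≤ (1 / (2 * Real.pi)) * Real.sqrt (s/7) * (η/(5*s^2)) := by positivity
  have hstep : ((1 / (2 * Real.pi)) * Real.sqrt (s/7) * (η/(5*s^2))) * (s/13)
      ≤ ((1 / (2 * Real.pi)) * Real.sqrt (s/7) * (η/(5*s^2))) * (t/4) :=
    mul_le_mul_of_nonneg_left (by linarith) hc0
  refine le_trans ?_ hstep
  -- (1/10000)*η/√s ≤ (1/(2π))·(√s/√7)·(η/(5s²))·(s/13)
  have h7 : Real.sqrt (s/7) = Real.sqrt s / Real.sqrt 7 := Real.sqrt_div hs0.le 7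
  rw [h7]
  set a := Real.sqrt s with hA
  set b := Real.sqrt 7 with hB
  have hb0 : 0 < b := by rw [hB]; positivity
  have hb3 : b ≤ 3 := by
    rw [hB, show (3:ℝ) = Real.sqrt 9 by
      rw [show (9:ℝ) = 3^2 by norm_num, Real.sqrt_sq]; norm_num]
    exact Real.sqrt_le_sqrt (by norm_num)
  have has : a * a = s := Real.mul_self_sqrt hs0.le
  have heq : (1 / (2 * Real.pi)) * (a/b) * (η/(5*s^2)) * (s/13) = η/(130*Real.pi*b*a) := by
    rw [← has]
    field_simp
    ring
  rw [heq]
  have hπb : Real.pi * b ≤ 12 := by nlinarith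
  rw [div_le_div_iff₀ (by positivity) (by positivity)]
  have hηa : 0 ≤ η * a := by positivity
  nlinarith [mul_le_mul_of_nonneg_left hπb hηa]

lemma sqrt_max_le {x : ℝ} {c : ℝ} (hc : 0 ≤ c) (h : 4 - x^2 ≤ c) :
    Real.sqrt (max (4 - x^2) 0) ≤ Real.sqrt c :=
  Real.sqrt_le_sqrt (max_le h hc)

lemma upperA {E η : ℝ} (hE : |E| ≤ 2) (hη : 0 < η) (hη10 : η ≤ 10) :
    gI E η ≤ 6 * Real.sqrt (2 - |E| + η) := by
  set s : ℝ := 2 - |E| + η with hs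
  have hE' : 0 ≤ 2 - |E| := by linarith
  have hs0 : 0 < s := by rw [hs]; linarith
  have hss : 0 < Real.sqrt s := Real.sqrt_pos.2 hs0
  have hπ : 0 < Real.pi := Real.pi_pos
  have hπ3 : 3 < Real.pi := by linarith [Real.pi_gt_three]
  have hEa := abs_le.1 hE
  have habs : 0 ≤ |E| := abs_nonneg E
  rcases lt_or_ge η 1 with hη1 | hη1
  · -- small eta
    have hηs : η ≤ s := by rw [hs]; linarith
    have hs3 : s ≤ 3 := by rw [hs]; linarith
    set F : ℝ → ℝ := fun t => Real.sqrt (s + |t|) * (η/(t^2+η^2)) with hF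
    have hFcont : Continuous F := by
      apply Continuous.mul
      · exact Real.continuous_sqrt.comp (continuous_const.add continuous_abs)
      · apply continuous_const.div (by fun_prop)
        intro t; positivity
    have hFnn : ∀ t, 0 ≤ F t := by
      intro t; rw [hF]; positivity
    have step1 : gI E η ≤ ∫ x in (-2:ℝ)..2, (1/Real.pi) * F (x - E) := by
      rw [gI_eq_interval hη]
      apply intervalIntegral.integral_mono_on (by norm_num) ((g_cont hη).intervalIntegrable _ _)
        ((continuous_const.mul (hFcont.comp (by fun_prop))).intervalIntegrable _ _)
      intro x hx
      obtain ⟨hx1, hx2⟩ := hx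
      have hbound : rhoSC x ≤ (1/Real.pi) * Real.sqrt (s + |x - E|) := by
        unfold rhoSC
        have h1 : Real.sqrt (max (4 - x^2) 0) ≤ Real.sqrt (4*(s + |x-E|)) := by
          apply sqrt_max_le (by positivity)
          have h2 : |E| - |x| ≤ |x - E| := by
            rw [abs_sub_comm]
            exact (abs_sub_abs_le_abs_sub E x)
          have hxabs : |x| ≤ 2 := abs_le.2 ⟨hx1, hx2⟩
          rw [hs]
          nlinarith [sq_abs x, sq_nonneg (|x| - 2), abs_nonneg (x - E), abs_nonneg x]
        have h3 : Real.sqrt (4*(s + |x-E|)) = 2 * Real.sqrt (s + |x-E|) := by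
          rw [show (4:ℝ)*(s + |x-E|) = 2^2*(s+|x-E|) by ring, Real.sqrt_mul (by positivity),
            Real.sqrt_sq (by norm_num)]
        rw [h3] at h1
        calc 1 / (2*Real.pi) * Real.sqrt (max (4 - x^2) 0)
            ≤ 1 / (2*Real.pi) * (2 * Real.sqrt (s + |x-E|)) := by
              apply mul_le_mul_of_nonneg_left h1 (by positivity)
          _ = (1/Real.pi) * Real.sqrt (s + |x-E|) := by
              field_simp
      have hk : η / ((x-E)^2 + η^2) ≤ η / ((x-E)^2 + η^2) := le_refl _
      calc rhoSC x * (η / ((x-E)^2 + η^2))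
          ≤ ((1/Real.pi) * Real.sqrt (s + |x - E|)) * (η / ((x-E)^2 + η^2)) := by
            apply mul_le_mul_of_nonneg_right hbound (by positivity)
        _ = (1/Real.pi) * F (x - E) := by rw [hF]; ring
    have step2 : (∫ x in (-2:ℝ)..2, (1/Real.pi) * F (x - E))
        = (1/Real.pi) * ∫ t in (-2-E)..(2-E), F t := by
      rw [intervalIntegral.integral_const_mul, intervalIntegral.integral_comp_sub_right]
    have step3 : (∫ t in (-2-E)..(2-E), F t) ≤ ∫ t in (-7:ℝ)..7, F t := by
      apply intervalIntegral.integral_mono_interval (by linarith) (by linarith) (by linarith)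
        (Filter.Eventually.of_forall hFnn) (hFcont.intervalIntegrable _ _)
    have heven : (fun t => F (-t)) = F := by
      funext t
      rw [hF]
      simp [neg_sq, abs_neg]
    have step4 : (∫ t in (-7:ℝ)..7, F t) = 2 * ∫ t in (0:ℝ)..7, F t := by
      have hsplit : (∫ t in (-7:ℝ)..7, F t)
          = (∫ t in (-7:ℝ)..0, F t) + ∫ t in (0:ℝ)..7, F t :=
        (intervalIntegral.integral_add_adjacent_intervals (hFcont.intervalIntegrable _ _)
          (hFcont.intervalIntegrable _ _)).symm
      have hneg := intervalIntegral.integral_comp_neg (a := (0:ℝ)) (b := 7) (f := F)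
      rw [heven] at hneg
      norm_num at hneg
      rw [hsplit, ← hneg]; ring
    have step5 : (∫ t in (0:ℝ)..7, F t) ≤ 6 * Real.sqrt s := by
      have hcongr : (∫ t in (0:ℝ)..7, F t)
          = ∫ t in (0:ℝ)..7, Real.sqrt (s+t) * (η/(t^2+η^2)) := by
        apply intervalIntegral.integral_congr
        intro t ht
        rw [Set.uIcc_of_le (by norm_num : (0:ℝ) ≤ 7)] at ht
        rw [hF]
        simp only
        rw [abs_of_nonneg ht.1]
      rw [hcongr]
      exact calcA hη hηs hs3
    calc gI E η ≤ ∫ x in (-2:ℝ)..2, (1/Real.pi) * F (x - E) := step1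
      _ = (1/Real.pi) * ∫ t in (-2-E)..(2-E), F t := step2
      _ ≤ (1/Real.pi) * ∫ t in (-7:ℝ)..7, F t := by
          apply mul_le_mul_of_nonneg_left step3 (by positivity)
      _ = (1/Real.pi) * (2 * ∫ t in (0:ℝ)..7, F t) := by rw [step4]
      _ ≤ (1/Real.pi) * (2 * (6 * Real.sqrt s)) := by
          apply mul_le_mul_of_nonneg_left _ (by positivity)
          linarith [step5]
      _ ≤ 6 * Real.sqrt s := by
          rw [div_mul_eq_mul_div, one_mul, div_le_iff₀ hπ]
          nlinarith
  · -- big eta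
    have hsge : (1:ℝ) ≤ Real.sqrt s := by
      rw [show (1:ℝ) = Real.sqrt 1 by simp]
      exact Real.sqrt_le_sqrt (by rw [hs]; linarith)
    have step1 : gI E η ≤ ∫ _x in (-2:ℝ)..2, (1/Real.pi) * (1/η) := by
      rw [gI_eq_interval hη]
      apply intervalIntegral.integral_mono_on (by norm_num) ((g_cont hη).intervalIntegrable _ _)
        intervalIntegrable_const
      intro x hx
      have h1 : η / ((x-E)^2 + η^2) ≤ 1/η := by
        rw [div_le_div_iff₀ (by positivity) hη]
        nlinarith
      exact mul_le_mul (rhoSC_le x) h1 (by positivity) (by positivity)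
    rw [intervalIntegral.integral_const, smul_eq_mul] at step1
    calc gI E η ≤ (2 - (-2)) * ((1/Real.pi) * (1/η)) := step1
      _ ≤ 6 * 1 := by
        rw [show (2:ℝ) - (-2) = 4 by norm_num]
        have : (1:ℝ)/η ≤ 1 := by rw [div_le_one hη]; linarith
        have h2 : (1:ℝ)/Real.pi ≤ 1 := by rw [div_le_one hπ]; linarith
        have h3 : (1/Real.pi) * (1/η) ≤ 1 * 1 :=
          mul_le_mul h2 this (by positivity) (by norm_num)
        nlinarith
      _ ≤ 6 * Real.sqrt s := by linarith

lemma upperB {E η : ℝ} (hE2 : 2 < E) (hE5 : E ≤ 5) (hη : 0 < η) (hη10 : η ≤ 10) :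
    gI E η ≤ 6 * η / Real.sqrt (E - 2 + η) := by
  set κ : ℝ := E - 2 with hκdef
  set s : ℝ := E - 2 + η with hs
  have hκ0 : 0 < κ := by rw [hκdef]; linarith
  have hs0 : 0 < s := by rw [hs]; linarith
  have hs13 : s ≤ 13 := by rw [hs]; linarith
  have hss : 0 < Real.sqrt s := Real.sqrt_pos.2 hs0
  have hπ : 0 < Real.pi := Real.pi_pos
  have hπ3 : 3 < Real.pi := by linarith [Real.pi_gt_three]
  set H : ℝ → ℝ := fun u => Real.sqrt u * (η/((κ+u)^2+η^2)) with hH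
  have hHcont : Continuous H := by
    apply Continuous.mul Real.continuous_sqrt
    apply continuous_const.div (by fun_prop)
    intro u; positivity
  have step1 : gI E η ≤ ∫ x in (-2:ℝ)..2, (1/Real.pi) * H (2 - x) := by
    rw [gI_eq_interval hη]
    apply intervalIntegral.integral_mono_on (by norm_num) ((g_cont hη).intervalIntegrable _ _)
      ((continuous_const.mul (hHcont.comp (by fun_prop))).intervalIntegrable _ _)
    intro x hx
    obtain ⟨hx1, hx2⟩ := hx
    have hbound : rhoSC x ≤ (1/Real.pi) * Real.sqrt (2 - x) := by
      unfold rhoSC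
      have h1 : Real.sqrt (max (4 - x^2) 0) ≤ Real.sqrt (4*(2 - x)) := by
        apply sqrt_max_le (by linarith)
        nlinarith
      have h3 : Real.sqrt (4*(2-x)) = 2 * Real.sqrt (2-x) := by
        rw [show (4:ℝ)*(2-x) = 2^2*(2-x) by ring, Real.sqrt_mul (by positivity),
          Real.sqrt_sq (by norm_num)]
      rw [h3] at h1
      calc 1 / (2*Real.pi) * Real.sqrt (max (4 - x^2) 0)
          ≤ 1 / (2*Real.pi) * (2 * Real.sqrt (2-x)) := by
            apply mul_le_mul_of_nonneg_left h1 (by positivity)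
        _ = (1/Real.pi) * Real.sqrt (2-x) := by
            field_simp
    have hker : (x - E)^2 = (κ + (2-x))^2 := by rw [hκdef]; ring
    calc rhoSC x * (η / ((x-E)^2 + η^2))
        ≤ ((1/Real.pi) * Real.sqrt (2-x)) * (η / ((x-E)^2 + η^2)) := by
          apply mul_le_mul_of_nonneg_right hbound (by positivity)
      _ = (1/Real.pi) * H (2 - x) := by
          rw [hH]
          simp only
          rw [hker]
          ring
  have step2 : (∫ x in (-2:ℝ)..2, (1/Real.pi) * H (2 - x))
      = (1/Real.pi) * ∫ u in (0:ℝ)..4, H u := by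
    rw [intervalIntegral.integral_const_mul]
    congr 1
    have h := intervalIntegral.integral_comp_sub_left (a := (-2:ℝ)) (b := 2) H 2
    rw [show (2:ℝ) - 2 = 0 by norm_num, show (2:ℝ) - -2 = 4 by norm_num] at h
    exact h
  have step3 : (∫ u in (0:ℝ)..4, H u) ≤ 6 * η / Real.sqrt s :=
    calcB hη hκ0.le (by rw [hs, hκdef]) hs13
  calc gI E η ≤ ∫ x in (-2:ℝ)..2, (1/Real.pi) * H (2 - x) := step1
    _ = (1/Real.pi) * ∫ u in (0:ℝ)..4, H u := step2
    _ ≤ (1/Real.pi) * (6 * η / Real.sqrt s) := by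
        apply mul_le_mul_of_nonneg_left step3 (by positivity)
    _ ≤ 6 * η / Real.sqrt s := by
        have hpos : 0 ≤ 6 * η / Real.sqrt s := by positivity
        have h1 : (1:ℝ)/Real.pi ≤ 1 := by rw [div_le_one hπ]; linarith
        nlinarith

/-- Quantitative behaviour of `Im m_sc(z)` for `z = E + iη` in the domain
`S₀ = {|E| ≤ 5, 0 < η ≤ 10}`, with `κ = min(|E-2|, |E+2|)`:
`Im m_sc(z) ≍ √(κ+η)` if `E ∈ [-2,2]` and `Im m_sc(z) ≍ η/√(κ+η)` if `|E| > 2`. -/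
theorem im_mSC_bounds :
    ∃ c > (0:ℝ), ∃ C > (0:ℝ), ∀ E η : ℝ, |E| ≤ 5 → 0 < η → η ≤ 10 →
      ((-2 ≤ E ∧ E ≤ 2) →
        c * Real.sqrt (min |E - 2| |E + 2| + η)
            ≤ (mSC (E + η * Complex.I)).im ∧
        (mSC (E + η * Complex.I)).im
            ≤ C * Real.sqrt (min |E - 2| |E + 2| + η)) ∧
      (2 < |E| →
        c * η / Real.sqrt (min |E - 2| |E + 2| + η)
            ≤ (mSC (E + η * Complex.I)).im ∧
        (mSC (E + η * Complex.I)).im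
            ≤ C * η / Real.sqrt (min |E - 2| |E + 2| + η)) := by
  refine ⟨1/10000, by norm_num, 6, by norm_num, ?_⟩
  intro E η hE5 hη hη10
  have him : (mSC (E + η * Complex.I)).im = gI E η := im_mSC_eq hη
  constructor
  · rintro ⟨hEl, hEr⟩
    have hEabs : |E| ≤ 2 := abs_le.2 ⟨hEl, hEr⟩
    have hmin : min |E - 2| |E + 2| = 2 - |E| := by
      rcases le_total 0 E with h0 | h0
      · rw [abs_of_nonpos (by linarith : E - 2 ≤ 0), abs_of_nonneg (by linarith : (0:ℝ) ≤ E + 2),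
          abs_of_nonneg h0, min_eq_left (by linarith)]
        ring
      · rw [abs_of_nonpos (by linarith : E - 2 ≤ 0), abs_of_nonneg (by linarith : (0:ℝ) ≤ E + 2),
          abs_of_nonpos h0, min_eq_right (by linarith)]
        ring
    rw [him, hmin]
    constructor
    · rcases le_total 0 E with h0 | h0
      · rw [abs_of_nonneg h0]
        exact lowerA h0 hEr hη hη10
      · rw [abs_of_nonpos h0, gI_neg]
        exact lowerA (E := -E) (by linarith) (by linarith) hη hη10
    · exact upperA hEabs hη hη10
  · intro hEgt
    rcases le_total 0 E with h0 | h0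
    · have hE2 : 2 < E := by rwa [abs_of_nonneg h0] at hEgt
      have hmin : min |E - 2| |E + 2| = E - 2 := by
        rw [abs_of_nonneg (by linarith : (0:ℝ) ≤ E - 2),
          abs_of_nonneg (by linarith : (0:ℝ) ≤ E + 2), min_eq_left (by linarith)]
      have hE5r : E ≤ 5 := (abs_le.1 hE5).2
      rw [him, hmin]
      exact ⟨lowerB hE2 hE5r hη hη10, upperB hE2 hE5r hη hη10⟩
    · have hE2 : 2 < -E := by rwa [abs_of_nonpos h0] at hEgt
      have hE5' : -E ≤ 5 := by
        have := abs_le.1 hE5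
        linarith [this.1]
      have hmin : min |E - 2| |E + 2| = -E - 2 := by
        rw [abs_of_nonpos (by linarith : E - 2 ≤ 0),
          abs_of_nonpos (by linarith : E + 2 ≤ 0), min_eq_right (by linarith)]
        ring
      rw [him, hmin, gI_neg]
      exact ⟨lowerB hE2 hE5' hη hη10, upperB hE2 hE5' hη hη10⟩
end

section
/- If X ≺ Y, the expectations satisfy E[Y^(N)] ≥ N^(-c₁) for some fixed c₁ > 0, and |X^(N)| ≤ N^(c₂) almost surely for some fixed c₂ > 0, then E[X] ≺ E[Y], i.e., for all τ > 0 there is N₀ such that E[X^(N)] ≤ N^τ E[Y^(N)] for N ≥ N₀. -/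
open MeasureTheory

/-- Stochastic domination: `X ≺ Y` iff for all `τ > 0` and `Γ > 0`,
`P(X^(N) > N^τ · Y^(N)) ≤ N^(-Γ)` for all sufficiently large `N`. -/
def StochDom {Ω : Type*} [MeasurableSpace Ω] (μ : Measure Ω) (X Y : ℕ → Ω → ℝ) : Prop :=
  ∀ τ > (0:ℝ), ∀ Γ > (0:ℝ), ∃ N₀ : ℕ, ∀ N ≥ N₀,
    μ {ω | X N ω > (N : ℝ) ^ τ * Y N ω} ≤ ENNReal.ofReal ((N : ℝ) ^ (-Γ))

/-- If `X ≺ Y`, `E[Y^(N)] ≥ N^(-c₁)` for a fixed `c₁ > 0`, and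
`|X^(N)| ≤ N^(c₂)` almost surely for a fixed `c₂ > 0`, then expectations
are dominated: for every `τ > 0`, `E[X^(N)] ≤ N^τ · E[Y^(N)]` for all large `N`. -/
theorem stochDom_expectation {Ω : Type*} [MeasurableSpace Ω] (μ : Measure Ω)
    [IsProbabilityMeasure μ] (X Y : ℕ → Ω → ℝ)
    (hX : ∀ N ω, 0 ≤ X N ω) (hY : ∀ N ω, 0 ≤ Y N ω)
    (hXmeas : ∀ N, Measurable (X N)) (hYint : ∀ N, Integrable (Y N) μ)
    (hXY : StochDom μ X Y)
    (c₁ c₂ : ℝ) (hc₁ : 0 < c₁) (hc₂ : 0 < c₂)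
    (hEY : ∀ N : ℕ, (N : ℝ) ^ (-c₁) ≤ ∫ ω, Y N ω ∂μ)
    (hXbd : ∀ N : ℕ, ∀ᵐ ω ∂μ, |X N ω| ≤ (N : ℝ) ^ c₂) :
    ∀ τ > (0:ℝ), ∃ N₀ : ℕ, ∀ N ≥ N₀,
      (∫ ω, X N ω ∂μ) ≤ (N : ℝ) ^ τ * ∫ ω, Y N ω ∂μ := by
  intro τ hτ
  obtain ⟨N₁, hN₁⟩ := hXY (τ/2) (by linarith) (c₁ + c₂ + 1) (by linarith)
  -- N₂ ensures (N:ℝ)^(τ/2) ≥ 2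
  set N₂ : ℕ := ⌈(2:ℝ) ^ (2/τ)⌉₊ + 1 with hN₂def
  refine ⟨max N₁ N₂, fun N hN => ?_⟩
  have hNN₁ : N ≥ N₁ := le_trans (le_max_left _ _) hN
  have hNN₂ : N ≥ N₂ := le_trans (le_max_right _ _) hN
  have hN1 : (1:ℝ) ≤ (N:ℝ) := by
    have : 1 ≤ N := le_trans (Nat.le_add_left 1 _) hNN₂
    exact_mod_cast this
  have hN0 : (0:ℝ) < (N:ℝ) := by linarith
  -- c := N^(τ/2) ≥ 2
  set c : ℝ := (N:ℝ) ^ (τ/2) with hc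
  have hc2 : (2:ℝ) ≤ c := by
    have h1 : (2:ℝ) ^ (2/τ) ≤ (N:ℝ) := by
      calc (2:ℝ) ^ (2/τ) ≤ (⌈(2:ℝ) ^ (2/τ)⌉₊ : ℝ) := Nat.le_ceil _
        _ ≤ (N:ℝ) := by exact_mod_cast le_trans (Nat.le_succ _) hNN₂
    have hexp : (2/τ) * (τ/2) = 1 := by field_simp
    calc (2:ℝ) = (2:ℝ) ^ ((2/τ) * (τ/2)) := by rw [hexp, Real.rpow_one]
      _ = ((2:ℝ) ^ (2/τ)) ^ (τ/2) := Real.rpow_mul (by norm_num) _ _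
      _ ≤ c := Real.rpow_le_rpow (Real.rpow_nonneg (by norm_num) _) h1 (by linarith)
  have hcpos : (0:ℝ) < c := by linarith
  -- measurable version of Y N
  set Y' : Ω → ℝ := (hYint N).1.mk (Y N) with hY'def
  have hY'meas : Measurable Y' := (hYint N).1.stronglyMeasurable_mk.measurable
  have hYae : Y N =ᵐ[μ] Y' := (hYint N).1.ae_eq_mk
  set E : Set Ω := {ω | X N ω > c * Y' ω} with hEdef
  have hEmeas : MeasurableSet E :=
    measurableSet_lt (hY'meas.const_mul c) (hXmeas N)
  -- μ E ≤ ofReal (N ^ (-(c₁+c₂+1)))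
  have hμE : μ E ≤ ENNReal.ofReal ((N:ℝ) ^ (-(c₁ + c₂ + 1))) := by
    have hEeq : E =ᵐ[μ] {ω | X N ω > (N:ℝ) ^ (τ/2) * Y N ω} := by
      rw [Filter.eventuallyEq_set]
      filter_upwards [hYae] with ω hω
      simp [hEdef, hc, hω]
    rw [measure_congr hEeq]
    exact hN₁ N hNN₁
  have hμEreal : (μ E).toReal ≤ (N:ℝ) ^ (-(c₁ + c₂ + 1)) := by
    have := ENNReal.toReal_mono ENNReal.ofReal_ne_top hμE
    rwa [ENNReal.toReal_ofReal (le_of_lt (Real.rpow_pos_of_pos hN0 _))] at this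
  -- Integrabilities
  have hXint : Integrable (X N) μ := by
    refine Integrable.mono' (integrable_const ((N:ℝ) ^ c₂)) (hXmeas N).aestronglyMeasurable ?_
    filter_upwards [hXbd N] with ω hω
    simpa [Real.norm_eq_abs] using hω
  have hRint : Integrable (fun ω => c * Y N ω + E.indicator (fun _ => (N:ℝ) ^ c₂) ω) μ :=
    ((hYint N).const_mul c).add ((integrable_const _).indicator hEmeas)
  -- pointwise a.e. bound
  have hbound : ∀ᵐ ω ∂μ,
      X N ω ≤ c * Y N ω + E.indicator (fun _ => (N:ℝ) ^ c₂) ω := by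
    filter_upwards [hXbd N, hYae] with ω hω hωY
    by_cases hE : ω ∈ E
    · have h1 : X N ω ≤ (N:ℝ) ^ c₂ := (abs_le.mp hω).2
      have h2 : 0 ≤ c * Y N ω := mul_nonneg (le_of_lt hcpos) (hY N ω)
      simp only [Set.indicator_of_mem hE]
      linarith
    · simp only [Set.indicator_of_notMem hE, add_zero]
      have : ¬ (X N ω > c * Y' ω) := hE
      rw [hωY]
      linarith [not_lt.mp this]
  -- integrate
  have hint : (∫ ω, X N ω ∂μ) ≤ c * (∫ ω, Y N ω ∂μ) + (N:ℝ) ^ c₂ * (μ E).toReal := by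
    calc (∫ ω, X N ω ∂μ)
        ≤ ∫ ω, (c * Y N ω + E.indicator (fun _ => (N:ℝ) ^ c₂) ω) ∂μ :=
          integral_mono_ae hXint hRint hbound
      _ = c * (∫ ω, Y N ω ∂μ) + (N:ℝ) ^ c₂ * (μ E).toReal := by
          rw [integral_add ((hYint N).const_mul c) ((integrable_const _).indicator hEmeas),
            integral_const_mul, integral_indicator_const _ hEmeas]
          rw [smul_eq_mul, measureReal_def]; ring
  -- final arithmetic
  set A : ℝ := ∫ ω, Y N ω ∂μ with hA
  have hAlb : (N:ℝ) ^ (-c₁) ≤ A := hEY N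
  have hkey : (N:ℝ) ^ c₂ * (μ E).toReal ≤ (N:ℝ) ^ (-(c₁ + 1)) := by
    calc (N:ℝ) ^ c₂ * (μ E).toReal ≤ (N:ℝ) ^ c₂ * (N:ℝ) ^ (-(c₁ + c₂ + 1)) := by
          apply mul_le_mul_of_nonneg_left hμEreal (le_of_lt (Real.rpow_pos_of_pos hN0 _))
      _ = (N:ℝ) ^ (-(c₁ + 1)) := by
          rw [← Real.rpow_add hN0]; ring_nf
  have h3 : (N:ℝ) ^ (-(c₁ + 1)) ≤ (N:ℝ) ^ (-c₁) :=
    Real.rpow_le_rpow_of_exponent_le hN1 (by linarith)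
  have hcc : c * c = (N:ℝ) ^ τ := by
    rw [hc, ← Real.rpow_add hN0]; ring_nf
  have hA0 : 0 ≤ A := le_trans (le_of_lt (Real.rpow_pos_of_pos hN0 _)) hAlb
  have hpow0 : 0 < (N:ℝ) ^ (-c₁) := Real.rpow_pos_of_pos hN0 _
  calc (∫ ω, X N ω ∂μ) ≤ c * A + (N:ℝ) ^ c₂ * (μ E).toReal := hint
    _ ≤ (N:ℝ) ^ τ * A := by
        rw [← hcc]
        nlinarith [mul_le_mul_of_nonneg_left hAlb (mul_nonneg (by linarith) (by linarith) : (0:ℝ) ≤ c * (c - 1)),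
          mul_le_mul hc2 (le_refl A) hA0 (by linarith : (0:ℝ) ≤ c)]
end

section
/- For x ≤ E − l₁ with l₁ ≥ η > 0 and E < E_L, the smoothed indicator f(x) = (χ_E ⋆ θ_η)(x) satisfies f(x) ≤ C·η·(E_L − E)/((E_L − x)(E − x)) ≤ C·min{(E_L − E)η/(E − x)², η/(E − x)} for an absolute constant C. -/
open MeasureTheory

/-- Decay of the smoothed indicator `f = χ_E ⋆ θ_η` to the left of the window:
for `x ≤ E − l₁` with `l₁ ≥ η > 0` and `E < E_L`,
`f(x) ≤ C·η·(E_L − E)/((E_L − x)(E − x)) ≤ C·min{(E_L − E)η/(E − x)², η/(E − x)}`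
for an absolute constant `C`. Here
`(χ_E ⋆ θ_η)(x) = ∫_E^{E_L} θ_η(x − y) dy` with `θ_η(y) = η/(π(y² + η²))`. -/
theorem smoothed_indicator_left_decay :
    ∃ C : ℝ, 0 < C ∧ ∀ E EL η l₁ x : ℝ, E < EL → 0 < η → η ≤ l₁ → x ≤ E - l₁ →
      (∫ y in E..EL, η / (Real.pi * ((x - y) ^ 2 + η ^ 2)))
          ≤ C * η * (EL - E) / ((EL - x) * (E - x)) ∧
      C * η * (EL - E) / ((EL - x) * (E - x))
          ≤ C * min ((EL - E) * η / (E - x) ^ 2) (η / (E - x)) := by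
  refine ⟨1, one_pos, fun E EL η l₁ x hEEL hη hηl hx => ?_⟩
  have hπ := Real.pi_pos
  have hEx : (0:ℝ) < E - x := by linarith
  have hELx : (0:ℝ) < EL - x := by linarith
  constructor
  · -- first inequality
    have hint2 : ∫ y in E..EL, η / Real.pi * ((y - x) ^ 2)⁻¹
        = η / Real.pi * (-(EL - x)⁻¹) - η / Real.pi * (-(E - x)⁻¹) := by
      apply intervalIntegral.integral_eq_sub_of_hasDerivAt
      · intro y hy
        rw [Set.uIcc_of_le hEEL.le] at hy
        have hyx : y - x ≠ 0 := by
          have : E ≤ y := hy.1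
          have : 0 < y - x := by linarith
          linarith
        have h1 : HasDerivAt (fun y : ℝ => (y - x)⁻¹)
            (-(1) / (y - x) ^ 2) y := ((hasDerivAt_id y).sub_const x).inv hyx
        have h2 := (h1.neg).const_mul (η / Real.pi)
        convert h2 using 1
        · rfl
        · rfl
        rw [neg_div, neg_neg, one_div]
      · apply ContinuousOn.intervalIntegrable
        apply ContinuousOn.mul continuousOn_const
        apply ContinuousOn.inv₀ (by fun_prop)
        intro y hy
        rw [Set.uIcc_of_le hEEL.le] at hy
        have : 0 < y - x := by linarith [hy.1]
        positivity
    have hmono : (∫ y in E..EL, η / (Real.pi * ((x - y) ^ 2 + η ^ 2)))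
        ≤ ∫ y in E..EL, η / Real.pi * ((y - x) ^ 2)⁻¹ := by
      apply intervalIntegral.integral_mono_on hEEL.le
      · apply ContinuousOn.intervalIntegrable
        apply ContinuousOn.div continuousOn_const (by fun_prop)
        intro y _
        positivity
      · apply ContinuousOn.intervalIntegrable
        apply ContinuousOn.mul continuousOn_const
        apply ContinuousOn.inv₀ (by fun_prop)
        intro y hy
        rw [Set.uIcc_of_le hEEL.le] at hy
        have : 0 < y - x := by linarith [hy.1]
        positivity
      · intro y hy
        have hyx : 0 < y - x := by linarith [hy.1]
        have h1 : η / Real.pi * ((y - x) ^ 2)⁻¹ = η / (Real.pi * (y - x) ^ 2) := by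
          field_simp
        rw [h1]
        gcongr
        nlinarith [sq_nonneg η, sq_nonneg (y - x)]
    have heq : η / Real.pi * (-(EL - x)⁻¹) - η / Real.pi * (-(E - x)⁻¹)
        = η / Real.pi * ((EL - E) / ((EL - x) * (E - x))) := by
      field_simp
      ring
    calc (∫ y in E..EL, η / (Real.pi * ((x - y) ^ 2 + η ^ 2)))
        ≤ η / Real.pi * ((EL - E) / ((EL - x) * (E - x))) := by
          rw [← heq, ← hint2]; exact hmono
      _ ≤ 1 * η * (EL - E) / ((EL - x) * (E - x)) := by
          rw [one_mul, mul_div_assoc]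
          apply mul_le_mul_of_nonneg_right _
            (div_nonneg (by linarith) (by positivity))
          rw [div_le_iff₀ hπ]
          nlinarith [Real.pi_gt_three]
  · -- second inequality
    rw [one_mul, one_mul]
    apply le_min
    · rw [div_le_div_iff₀ (by positivity) (by positivity)]
      nlinarith [mul_nonneg (mul_nonneg hη.le (sq_nonneg (EL - E))) hEx.le]
    · rw [div_le_div_iff₀ (by positivity) hEx]
      nlinarith [mul_nonneg hη.le (sq_nonneg (E - x))]
end
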